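/- Let (X,d) be a Robinson space, let < be a compatible order of (X,d), and let S ⊆ X be an interval of <. Let rev_S be the total order obtained from < by reversing the order of the elements of S (i.e., x rev_S y iff either x < y and not both x,y ∈ S, or y < x and x,y ∈ S). Then rev_S is a compatible order of (X,d) if and only if S is an mmodule of (X,d). -/

import Mathlib

structure Dissim (X : Type*) where
  d : X → X → ℝ
  symm : ∀ x y, d x y = d y x
  nonneg : ∀ x y, 0 ≤ d x y
  self : ∀ x, d x x = 0

variable {X : Type*}

def Compatible (D : Dissim X) (lt : X → X → Prop) : Prop :=
  ∀ x y z : X, lt x y → lt y z → D.d x y ≤ D.d x z ∧ D.d y z ≤ D.d x z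

def IsCompatOrder (D : Dissim X) (lt : X → X → Prop) : Prop :=
  IsStrictTotalOrder X lt ∧ Compatible D lt

def Robinson (D : Dissim X) : Prop :=
  ∃ lt : X → X → Prop, IsCompatOrder D lt

def IsMmodule (D : Dissim X) (M : Set X) : Prop :=
  ∀ z ∉ M, ∀ x ∈ M, ∀ y ∈ M, D.d z x = D.d z y

def IsInterval (lt : X → X → Prop) (I : Set X) : Prop :=
  ∀ a b c : X, lt a b → lt b c → a ∈ I → c ∈ I → b ∈ I

def IsBlock (D : Dissim X) (Y : Set X) : Prop :=
  ∀ lt : X → X → Prop, IsCompatOrder D lt → IsInterval lt Y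

noncomputable def diam (D : Dissim X) (Y : Set X) : ℝ :=
  sSup (Set.image2 D.d Y Y)

def Gdelta (D : Dissim X) (δ : ℝ) : SimpleGraph X where
  Adj x y := x ≠ y ∧ D.d x y ≠ δ
  symm := by
    refine ⟨?_⟩
    rintro x y ⟨hxy, hd⟩
    exact ⟨hxy.symm, by rw [D.symm]; exact hd⟩
  loopless := by refine ⟨?_⟩; rintro x ⟨h, -⟩; exact h rfl

def Gle (D : Dissim X) (δ : ℝ) : SimpleGraph X where
  Adj x y := x ≠ y ∧ D.d x y ≤ δ
  symm := by
    refine ⟨?_⟩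
    rintro x y ⟨hxy, hd⟩
    exact ⟨hxy.symm, by rw [D.symm]; exact hd⟩
  loopless := by refine ⟨?_⟩; rintro x ⟨h, -⟩; exact h rfl

def Glt (D : Dissim X) (δ : ℝ) : SimpleGraph X where
  Adj x y := x ≠ y ∧ D.d x y < δ
  symm := by
    refine ⟨?_⟩
    rintro x y ⟨hxy, hd⟩
    exact ⟨hxy.symm, by rw [D.symm]; exact hd⟩
  loopless := by refine ⟨?_⟩; rintro x ⟨h, -⟩; exact h rfl

def IsCompOf {V : Type*} (G : SimpleGraph V) (C : Set V) : Prop :=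
  ∃ x : V, C = {y | G.Reachable x y}

def MMax (D : Dissim X) : Set (Set X) :=
  {M | IsMmodule D M ∧ M ≠ Set.univ ∧
    ∀ M' : Set X, IsMmodule D M' → M' ≠ Set.univ → M ⊆ M' → M = M'}

def IsPartition {α : Type*} (P : Set (Set α)) : Prop :=
  (∀ A ∈ P, A.Nonempty) ∧
  (∀ A ∈ P, ∀ B ∈ P, A ≠ B → Disjoint A B) ∧
  ⋃₀ P = Set.univ

def IsCopartition {α : Type*} (P : Set (Set α)) : Prop :=
  IsPartition ((fun M => Mᶜ) '' P)

def SimpleGraph.restrictTo {V : Type*} (G : SimpleGraph V) (S : Set V) : SimpleGraph V where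
  Adj x y := x ∈ S ∧ y ∈ S ∧ G.Adj x y
  symm := by refine ⟨?_⟩; rintro x y ⟨hx, hy, h⟩; exact ⟨hy, hx, h.symm⟩
  loopless := by refine ⟨?_⟩; rintro x ⟨-, -, h⟩; exact G.irrefl h

def ConnectedWithin {V : Type*} (G : SimpleGraph V) (S : Set V) : Prop :=
  S.Nonempty ∧ ∀ x ∈ S, ∀ y ∈ S, (G.restrictTo S).Reachable x y

def IsCompWithin {V : Type*} (G : SimpleGraph V) (S : Set V) (C : Set V) : Prop :=
  ∃ x ∈ S, C = {y | (G.restrictTo S).Reachable x y}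

def IsStrictTotalOrderOn {α : Type*} (S : Set α) (lt : α → α → Prop) : Prop :=
  (∀ x ∈ S, ¬ lt x x) ∧
  (∀ x ∈ S, ∀ y ∈ S, ∀ z ∈ S, lt x y → lt y z → lt x z) ∧
  (∀ x ∈ S, ∀ y ∈ S, x ≠ y → (lt x y ∨ lt y x) ∧ ¬ (lt x y ∧ lt y x))

def CompatibleOn (D : Dissim X) (S : Set X) (lt : X → X → Prop) : Prop :=
  ∀ x ∈ S, ∀ y ∈ S, ∀ z ∈ S, lt x y → lt y z → D.d x y ≤ D.d x z ∧ D.d y z ≤ D.d x z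

def IsCompatOrderOn (D : Dissim X) (S : Set X) (lt : X → X → Prop) : Prop :=
  IsStrictTotalOrderOn S lt ∧ CompatibleOn D S lt

def FlatOn (D : Dissim X) (S : Set X) : Prop :=
  ∃ lt : X → X → Prop, IsCompatOrderOn D S lt ∧ (∃ x ∈ S, ∃ y ∈ S, lt x y) ∧
    ∀ lt' : X → X → Prop, IsCompatOrderOn D S lt' →
      (∀ x ∈ S, ∀ y ∈ S, (lt' x y ↔ lt x y)) ∨ (∀ x ∈ S, ∀ y ∈ S, (lt' x y ↔ lt y x))

def Flat (D : Dissim X) : Prop :=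
  ∃ lt : X → X → Prop, IsCompatOrder D lt ∧ (∃ x y : X, lt x y) ∧
    ∀ lt' : X → X → Prop, IsCompatOrder D lt' →
      (∀ x y : X, lt' x y ↔ lt x y) ∨ (∀ x y : X, lt' x y ↔ lt y x)

def IsCopointAt (D : Dissim X) (p : X) (C : Set X) : Prop :=
  IsMmodule D C ∧ C.Nonempty ∧ p ∉ C ∧
  ∀ C' : Set X, IsMmodule D C' → p ∉ C' → C ⊆ C' → C = C'

def bigGraph (D : Dissim X) (δ : ℝ) (I : Set (Set X)) : SimpleGraph (Set X) where
  Adj C C' := C ∈ I ∧ C' ∈ I ∧ C ≠ C' ∧ ∃ x ∈ C, ∃ y ∈ C', δ < D.d x y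
  symm := by
    refine ⟨?_⟩
    rintro C C' ⟨hC, hC', hne, x, hx, y, hy, hd⟩
    exact ⟨hC', hC, hne.symm, y, hy, x, hx, by rw [D.symm]; exact hd⟩
  loopless := by refine ⟨?_⟩; rintro C ⟨-, -, hne, -⟩; exact hne rfl

/-- reversing an interval S of a compatible order gives a compatible
order iff S is an mmodule. -/
theorem stmt1 [Fintype X] [Nonempty X] (D : Dissim X)
    (lt : X → X → Prop) (h : IsCompatOrder D lt)
    (S : Set X) (hInt : IsInterval lt S)
    (rev : X → X → Prop)
    (hrev : ∀ x y : X, rev x y ↔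
      ((lt x y ∧ ¬ (x ∈ S ∧ y ∈ S)) ∨ (lt y x ∧ x ∈ S ∧ y ∈ S))) :
    IsCompatOrder D rev ↔ IsMmodule D S := by
  obtain ⟨hsto, hcomp⟩ := h
  haveI := hsto
  constructor
  · rintro ⟨hsto', hcomp'⟩ z hz x hx y hy
    have key : ∀ a ∈ S, ∀ b ∈ S, lt a b → D.d z a = D.d z b := by
      intro a ha b hb hab
      rcases trichotomous_of lt z a with hza | rfl | haz
      · -- order z a b
        have h1 := (hcomp z a b hza hab).1
        have hzb : lt z b := trans_of lt hza hab
        have r1 : rev z b := (hrev z b).2 (Or.inl ⟨hzb, fun hc => hz hc.1⟩)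
        have r2 : rev b a := (hrev b a).2 (Or.inr ⟨hab, hb, ha⟩)
        have h2 := (hcomp' z b a r1 r2).1
        linarith
      · exact absurd ha hz
      · rcases trichotomous_of lt z b with hzb | rfl | hbz
        · exact absurd (hInt a z b haz hzb ha hb) hz
        · exact absurd hb hz
        · -- order a b z
          have h1 := (hcomp a b z hab hbz).2
          have haz' : lt a z := trans_of lt hab hbz
          have r1 : rev b a := (hrev b a).2 (Or.inr ⟨hab, hb, ha⟩)
          have r2 : rev a z := (hrev a z).2 (Or.inl ⟨haz', fun hc => hz hc.2⟩)
          have h2 := (hcomp' b a z r1 r2).2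
          rw [D.symm z a, D.symm z b]
          linarith
    rcases trichotomous_of lt x y with hxy | rfl | hyx
    · exact key x hx y hy hxy
    · rfl
    · exact (key y hy x hx hyx).symm
  · intro hM
    constructor
    · refine { trichotomous := ?_, irrefl := ?_, trans := ?_ }
      · intro a b
        rcases trichotomous_of lt a b with hab | rfl | hba
        · by_cases hS : a ∈ S ∧ b ∈ S
          · exact fun _ h2 => absurd ((hrev b a).2 (Or.inr ⟨hab, hS.2, hS.1⟩)) h2
          · exact fun h1 _ => absurd ((hrev a b).2 (Or.inl ⟨hab, hS⟩)) h1
        · exact fun _ _ => rfl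
        · by_cases hS : a ∈ S ∧ b ∈ S
          · exact fun h1 _ => absurd ((hrev a b).2 (Or.inr ⟨hba, hS⟩)) h1
          · exact fun _ h2 => absurd ((hrev b a).2 (Or.inl ⟨hba, fun hc => hS ⟨hc.2, hc.1⟩⟩)) h2
      · intro a hrel
        rcases (hrev a a).1 hrel with ⟨haa, -⟩ | ⟨haa, -⟩ <;>
          exact irrefl_of lt a haa
      · intro a b c hab hbc
        rcases (hrev a b).1 hab with ⟨h1, hn1⟩ | ⟨h1, ha, hb⟩ <;>
          rcases (hrev b c).1 hbc with ⟨h2, hn2⟩ | ⟨h2, hb', hc⟩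
        · -- lt a b, lt b c
          refine (hrev a c).2 (Or.inl ⟨trans_of lt h1 h2, fun hc => ?_⟩)
          exact hn1 ⟨hc.1, hInt a b c h1 h2 hc.1 hc.2⟩
        · -- lt a b, lt c b, b,c ∈ S, hence a ∉ S
          have haS : a ∉ S := fun haS => hn1 ⟨haS, hb'⟩
          rcases trichotomous_of lt a c with hac | rfl | hca
          · exact (hrev a c).2 (Or.inl ⟨hac, fun hcc => haS hcc.1⟩)
          · exact absurd hc haS
          · exact absurd (hInt c a b hca h1 hc hb') haS
        · -- lt b a, a,b ∈ S, lt b c, hence c ∉ S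
          have hcS : c ∉ S := fun hcS => hn2 ⟨hb, hcS⟩
          rcases trichotomous_of lt a c with hac | rfl | hca
          · exact (hrev a c).2 (Or.inl ⟨hac, fun hcc => hcS hcc.2⟩)
          · exact absurd ha hcS
          · exact absurd (hInt b c a h2 hca hb ha) hcS
        · -- lt b a, lt c b, all in S
          exact (hrev a c).2 (Or.inr ⟨trans_of lt h2 h1, ha, hc⟩)
    · intro x y z hxy hyz
      rcases (hrev x y).1 hxy with ⟨h1, hn1⟩ | ⟨h1, hx, hy⟩ <;>
        rcases (hrev y z).1 hyz with ⟨h2, hn2⟩ | ⟨h2, hy', hz⟩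
      · exact hcomp x y z h1 h2
      · -- lt x y, lt z y, y,z ∈ S, x ∉ S
        have hxS : x ∉ S := fun hxS => hn1 ⟨hxS, hy'⟩
        have hxz : lt x z := by
          rcases trichotomous_of lt x z with hac | rfl | hca
          · exact hac
          · exact absurd hz hxS
          · exact absurd (hInt z x y hca h1 hz hy') hxS
        have hc := hcomp x z y hxz h2
        have he : D.d x y = D.d x z := hM x hxS y hy' z hz
        have e1 := D.symm y z
        have e2 := D.symm z y
        constructor <;> linarith
      · -- lt y x, x,y ∈ S, lt y z, z ∉ S
        have hzS : z ∉ S := fun hzS => hn2 ⟨hy, hzS⟩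
        have hxz : lt x z := by
          rcases trichotomous_of lt x z with hac | rfl | hca
          · exact hac
          · exact absurd hx hzS
          · exact absurd (hInt y z x h2 hca hy hx) hzS
        have hc := hcomp y x z h1 hxz
        have he : D.d z x = D.d z y := hM z hzS x hx y hy
        have e1 := D.symm x y
        have e2 := D.symm y x
        have e3 := D.symm z x
        have e4 := D.symm y z
        have e5 := D.symm z y
        constructor <;> linarith
      · -- lt y x, lt z y, all in S
        have hc := hcomp z y x h2 h1
        have e1 := D.symm x y
        have e2 := D.symm y x
        have e3 := D.symm z x
        have e4 := D.symm y z
        constructor <;> linarith
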